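/- arXiv:2009.08143 — 4 statements merged into one kernel-verified Lean document; each statement's English description precedes it below -/
import Mathlib

section
/- The exponential generating function F(x) = Σ_{k≥0} Ĩ_k(z)·x^k/k! of the sequence defined by Ĩ_0 = 1, Ĩ_1 = z, Ĩ_{k+1} = z·Ĩ_k + (k/4)(k-1-ω)·Ĩ_{k-1} satisfies the ODE (1 - x²/4)·F'(x) = (z - ωx/4)·F(x) with F(0) = 1, and equals F(x) = (1 - x/2)^{ω/2 - z}·(1 + x/2)^{ω/2 + z} for |x| < 2. -/
open Set Finset

/-- Coefficient growth bound: for `0 < r < 2`, `|I n| r^n ≤ C n!`. -/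
lemma aux_bound (ω z : ℝ) (I : ℕ → ℝ)
    (hrec : ∀ k : ℕ, 1 ≤ k →
      I (k + 1) = z * I k + (k : ℝ) / 4 * ((k : ℝ) - 1 - ω) * I (k - 1))
    {r : ℝ} (hr0 : 0 < r) (hr2 : r < 2) :
    ∃ C : ℝ, 1 ≤ C ∧ ∀ n : ℕ, |I n| * r ^ n ≤ C * (Nat.factorial n : ℝ) := by
  have h4 : 0 < 1 - r ^ 2 / 4 := by nlinarith
  obtain ⟨N, hN⟩ := exists_nat_ge ((|z| * r + |ω| * r ^ 2 / 4) / (1 - r ^ 2 / 4))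
  have hN' : |z| * r + |ω| * r ^ 2 / 4 ≤ (N : ℝ) * (1 - r ^ 2 / 4) := by
    rw [div_le_iff₀ h4] at hN; linarith
  set C : ℝ := (∑ k ∈ Finset.range (N + 2), |I k| * r ^ k) + 1 with hCdef
  have hsum_nonneg : 0 ≤ ∑ k ∈ Finset.range (N + 2), |I k| * r ^ k :=
    Finset.sum_nonneg fun k _ => by positivity
  have hC1 : 1 ≤ C := by simp only [hCdef]; linarith
  have hC0 : 0 ≤ C := by linarith
  refine ⟨C, hC1, ?_⟩
  intro n
  induction n using Nat.strong_induction_on with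
  | _ n ih =>
    by_cases hn : n < N + 2
    · have h1 : |I n| * r ^ n ≤ ∑ k ∈ Finset.range (N + 2), |I k| * r ^ k :=
        Finset.single_le_sum (f := fun k => |I k| * r ^ k)
          (fun k _ => by positivity) (Finset.mem_range.mpr hn)
      have h2 : |I n| * r ^ n ≤ C := by simp only [hCdef]; linarith
      have h3 : (1 : ℝ) ≤ (Nat.factorial n : ℝ) := by
        exact_mod_cast Nat.one_le_iff_ne_zero.mpr (Nat.factorial_ne_zero n)
      calc |I n| * r ^ n ≤ C := h2
        _ = C * 1 := by ring
        _ ≤ C * (Nat.factorial n : ℝ) := by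
            apply mul_le_mul_of_nonneg_left h3 hC0
    · push_neg at hn
      obtain ⟨m, rfl⟩ : ∃ m, n = m + 2 := ⟨n - 2, by omega⟩
      have hmN : (N : ℝ) ≤ (m : ℝ) := by exact_mod_cast (by omega : N ≤ m)
      have hIa := ih (m + 1) (by omega)
      have hIb := ih m (by omega)
      have hrec' := hrec (m + 1) (by omega)
      simp only [Nat.add_sub_cancel] at hrec'
      have e1 : |I (m + 2)| ≤ |z| * |I (m + 1)| + ((m : ℝ) + 1) / 4 * ((m : ℝ) + |ω|) * |I m| := by
      -- |I (m+2)| ≤ |z| |I(m+1)| + (m+1)/4 * |m - ω| * |I m| ≤ ...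
        have habs : |((m : ℝ) + 1) - 1 - ω| ≤ (m : ℝ) + |ω| := by
          have := abs_sub (((m : ℝ) + 1) - 1) ω
          simp only [add_sub_cancel_right] at this ⊢
          calc |(m : ℝ) - ω| ≤ |(m : ℝ)| + |ω| := abs_sub _ _
            _ = (m : ℝ) + |ω| := by rw [Nat.abs_cast]
        calc |I (m + 2)| = |z * I (m + 1) + ((m : ℝ) + 1) / 4 * (((m : ℝ) + 1) - 1 - ω) * I m| := by
              rw [hrec']; push_cast; ring_nf
          _ ≤ |z * I (m + 1)| + |((m : ℝ) + 1) / 4 * (((m : ℝ) + 1) - 1 - ω) * I m| := abs_add_le _ _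
          _ = |z| * |I (m + 1)| + (((m : ℝ) + 1) / 4) * |((m : ℝ) + 1) - 1 - ω| * |I m| := by
              rw [abs_mul, abs_mul, abs_mul, abs_div,
                abs_of_nonneg (show (0:ℝ) ≤ (m:ℝ) + 1 by positivity),
                abs_of_nonneg (show (0:ℝ) ≤ (4:ℝ) by norm_num)]
          _ ≤ |z| * |I (m + 1)| + ((m : ℝ) + 1) / 4 * ((m : ℝ) + |ω|) * |I m| := by
              gcongr
      have hfac2 : ((Nat.factorial (m + 2) : ℕ) : ℝ)
          = ((m : ℝ) + 2) * ((m : ℝ) + 1) * (Nat.factorial m : ℝ) := by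
        rw [Nat.factorial_succ, Nat.factorial_succ]; push_cast; ring
      have hfac1 : ((Nat.factorial (m + 1) : ℕ) : ℝ)
          = ((m : ℝ) + 1) * (Nat.factorial m : ℝ) := by
        rw [Nat.factorial_succ]; push_cast; ring
      have hscal : |z| * r + ((m : ℝ) + |ω|) * r ^ 2 / 4 ≤ (m : ℝ) + 2 := by nlinarith
      have hfacpos : (0 : ℝ) < (Nat.factorial m : ℝ) := by
        exact_mod_cast Nat.factorial_pos m
      have hrm : (0:ℝ) ≤ r ^ m := by positivity
      have hIm : 0 ≤ |I m| := abs_nonneg _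
      have hIm1 : 0 ≤ |I (m+1)| := abs_nonneg _
      calc |I (m + 2)| * r ^ (m + 2)
          ≤ (|z| * |I (m + 1)| + ((m : ℝ) + 1) / 4 * ((m : ℝ) + |ω|) * |I m|) * r ^ (m + 2) := by
            apply mul_le_mul_of_nonneg_right e1 (by positivity)
        _ = |z| * r * (|I (m + 1)| * r ^ (m + 1))
            + ((m : ℝ) + 1) * (((m : ℝ) + |ω|) * r ^ 2 / 4) * (|I m| * r ^ m) := by ring
        _ ≤ |z| * r * (C * (Nat.factorial (m + 1) : ℝ))
            + ((m : ℝ) + 1) * (((m : ℝ) + |ω|) * r ^ 2 / 4) * (C * (Nat.factorial m : ℝ)) := by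
            have hpos : (0:ℝ) ≤ ((m : ℝ) + 1) * (((m : ℝ) + |ω|) * r ^ 2 / 4) := by positivity
            gcongr
        _ = C * (Nat.factorial m : ℝ) * ((m : ℝ) + 1) * (|z| * r + ((m : ℝ) + |ω|) * r ^ 2 / 4) := by
            rw [hfac1]; ring
        _ ≤ C * (Nat.factorial m : ℝ) * ((m : ℝ) + 1) * ((m : ℝ) + 2) := by
            apply mul_le_mul_of_nonneg_left hscal (by positivity)
        _ = C * ((Nat.factorial (m + 2) : ℕ) : ℝ) := by rw [hfac2]; ring

set_option maxHeartbeats 1000000 in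
/-- The exponential generating function `F(x) = Σ Ĩ_k x^k/k!` of the sequence
`Ĩ_0 = 1`, `Ĩ_1 = z`, `Ĩ_{k+1} = z Ĩ_k + (k/4)(k-1-ω) Ĩ_{k-1}` satisfies
`(1 - x²/4) F'(x) = (z - ωx/4) F(x)` with `F(0) = 1`, and equals
`(1-x/2)^{ω/2-z} (1+x/2)^{ω/2+z}` for `|x| < 2`. -/
theorem stmt1 (ω z : ℝ) (I : ℕ → ℝ)
    (h0 : I 0 = 1) (h1 : I 1 = z)
    (hrec : ∀ k : ℕ, 1 ≤ k →
      I (k + 1) = z * I k + (k : ℝ) / 4 * ((k : ℝ) - 1 - ω) * I (k - 1)) :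
    ∀ F : ℝ → ℝ, (F = fun x => ∑' k : ℕ, I k * x ^ k / (Nat.factorial k : ℝ)) →
      F 0 = 1 ∧
      ∀ x : ℝ, |x| < 2 →
        (∃ d : ℝ, HasDerivAt F d x ∧ (1 - x ^ 2 / 4) * d = (z - ω * x / 4) * F x) ∧
        F x = (1 - x / 2) ^ (ω / 2 - z) * (1 + x / 2) ^ (ω / 2 + z) := by
  intro F hF
  -- value at 0
  have hF0 : F 0 = 1 := by
    rw [hF]
    have h2 : ∀ k : ℕ, k ≠ 0 → I k * (0:ℝ) ^ k / (Nat.factorial k : ℝ) = 0 := by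
      intro k hk; rw [zero_pow hk]; ring
    show (∑' k : ℕ, I k * (0:ℝ) ^ k / (Nat.factorial k : ℝ)) = 1
    rw [tsum_eq_single 0 h2]
    simp [h0]
  -- the ODE part, for every point of (-2,2)
  have hMain : ∀ x : ℝ, |x| < 2 →
      ∃ d : ℝ, HasDerivAt F d x ∧ (1 - x ^ 2 / 4) * d = (z - ω * x / 4) * F x := by
    intro x hx
    set r1 : ℝ := (|x| + 2) / 2 with hr1def
    set r2 : ℝ := (r1 + 2) / 2 with hr2def
    have hx0 : 0 ≤ |x| := abs_nonneg x
    have hxr1 : |x| < r1 := by rw [hr1def]; linarith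
    have hr1pos : 0 < r1 := by rw [hr1def]; linarith
    have hr1r2 : r1 < r2 := by rw [hr2def, hr1def]; linarith
    have hr2pos : 0 < r2 := lt_trans hr1pos hr1r2
    have hr22 : r2 < 2 := by rw [hr2def, hr1def]; linarith
    obtain ⟨C, hC1, hC⟩ := aux_bound ω z I hrec hr2pos hr22
    have hC0 : 0 < C := lt_of_lt_of_le one_pos hC1
    set q : ℝ := r1 / r2 with hqdef
    have hq0 : 0 < q := div_pos hr1pos hr2pos
    have hq1 : q < 1 := (div_lt_one hr2pos).mpr hr1r2
    have hqr2 : q * r2 = r1 := div_mul_cancel₀ r1 hr2pos.ne'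
    -- bound for the terms
    have hgb : ∀ y : ℝ, |y| ≤ r1 → ∀ n : ℕ,
        ‖I n * y ^ n / (Nat.factorial n : ℝ)‖ ≤ C * q ^ n := by
      intro y hy n
      have hfacpos : (0:ℝ) < (Nat.factorial n : ℝ) := by exact_mod_cast Nat.factorial_pos n
      have h1 : ‖I n * y ^ n / (Nat.factorial n : ℝ)‖
          = |I n| * |y| ^ n / (Nat.factorial n : ℝ) := by
        rw [Real.norm_eq_abs, abs_div, abs_mul, abs_pow, Nat.abs_cast]
      rw [h1, div_le_iff₀ hfacpos]
      have h2 : |y| ^ n ≤ q ^ n * r2 ^ n := by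
        rw [← mul_pow, hqr2]
        exact pow_le_pow_left₀ (abs_nonneg y) hy n
      calc |I n| * |y| ^ n ≤ |I n| * (q ^ n * r2 ^ n) := by
            apply mul_le_mul_of_nonneg_left h2 (abs_nonneg _)
        _ = q ^ n * (|I n| * r2 ^ n) := by ring
        _ ≤ q ^ n * (C * (Nat.factorial n : ℝ)) := by
            apply mul_le_mul_of_nonneg_left (hC n) (by positivity)
        _ = C * q ^ n * (Nat.factorial n : ℝ) := by ring
    have hgeom : Summable (fun n : ℕ => C * q ^ n) :=
      (summable_geometric_of_lt_one hq0.le hq1).mul_left C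
    -- derivative bound
    set u : ℕ → ℝ := fun n => C / r2 * ((n : ℝ) * q ^ (n - 1)) with hudef
    have hu : Summable u := by
      apply Summable.mul_left
      have h1 : Summable (fun n : ℕ => ((n : ℝ) + 1) * q ^ n) := by
        have h2 := summable_pow_mul_geometric_of_norm_lt_one (R := ℝ) 1
          (r := q) (by rwa [Real.norm_eq_abs, abs_of_pos hq0])
        have h3 := summable_geometric_of_lt_one hq0.le hq1
        simpa [pow_one, add_mul] using h2.add h3
      refine (summable_nat_add_iff 1).mp (h1.congr fun n => ?_)
      push_cast [Nat.add_sub_cancel]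
      ring
    have hub : ∀ (n : ℕ), ∀ y ∈ Metric.ball (0:ℝ) r1,
        ‖I n * ((n : ℝ) * y ^ (n - 1)) / (Nat.factorial n : ℝ)‖ ≤ u n := by
      intro n y hy
      have hy' : |y| < r1 := by simpa [Real.dist_eq] using hy
      match n with
      | 0 => simp [hudef]
      | Nat.succ m =>
        have hfacpos : (0:ℝ) < (Nat.factorial (m+1) : ℝ) := by
          exact_mod_cast Nat.factorial_pos (m+1)
        have h1 : ‖I (m+1) * (((m+1 : ℕ) : ℝ) * y ^ m) / (Nat.factorial (m+1) : ℝ)‖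
            = |I (m+1)| * (((m : ℝ) + 1) * |y| ^ m) / (Nat.factorial (m+1) : ℝ) := by
          rw [Real.norm_eq_abs, abs_div, abs_mul, abs_mul, abs_pow, Nat.abs_cast, Nat.abs_cast]
          push_cast; ring_nf
        have h2 : |y| ^ m ≤ q ^ m * r2 ^ m := by
          rw [← mul_pow, hqr2]
          exact pow_le_pow_left₀ (abs_nonneg y) hy'.le m
        have key := mul_le_mul_of_nonneg_left (hC (m+1))
          (show (0:ℝ) ≤ ((m : ℝ) + 1) * q ^ m by positivity)
        have hfac1 : ((Nat.factorial (m + 1) : ℕ) : ℝ)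
            = ((m : ℝ) + 1) * (Nat.factorial m : ℝ) := by
          rw [Nat.factorial_succ]; push_cast; ring
        show ‖I (m+1) * (((m+1 : ℕ) : ℝ) * y ^ (m + 1 - 1)) / (Nat.factorial (m+1) : ℝ)‖
            ≤ C / r2 * (((m+1 : ℕ) : ℝ) * q ^ (m + 1 - 1))
        rw [Nat.add_sub_cancel, h1, div_le_iff₀ hfacpos]
        have goal2 : |I (m+1)| * (((m : ℝ) + 1) * |y| ^ m) * r2
            ≤ C * (((m : ℝ) + 1) * q ^ m) * (Nat.factorial (m+1) : ℝ) := by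
          calc |I (m+1)| * (((m : ℝ) + 1) * |y| ^ m) * r2
              ≤ |I (m+1)| * (((m : ℝ) + 1) * (q ^ m * r2 ^ m)) * r2 := by
                have := mul_le_mul_of_nonneg_left h2
                  (show (0:ℝ) ≤ |I (m+1)| * ((m : ℝ) + 1) by positivity)
                nlinarith [this, hr2pos]
            _ = (((m : ℝ) + 1) * q ^ m) * (|I (m+1)| * r2 ^ (m+1)) := by ring
            _ ≤ (((m : ℝ) + 1) * q ^ m) * (C * (Nat.factorial (m+1) : ℝ)) := key
            _ = C * (((m : ℝ) + 1) * q ^ m) * (Nat.factorial (m+1) : ℝ) := by ring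
        calc |I (m+1)| * (((m : ℝ) + 1) * |y| ^ m)
            = |I (m+1)| * (((m : ℝ) + 1) * |y| ^ m) * r2 / r2 := by
              field_simp
          _ ≤ C * (((m : ℝ) + 1) * q ^ m) * (Nat.factorial (m+1) : ℝ) / r2 := by
              exact div_le_div_of_nonneg_right goal2 hr2pos.le |>.trans_eq rfl
          _ = C / r2 * (((m+1 : ℕ) : ℝ) * q ^ m) * (Nat.factorial (m+1) : ℝ) := by
              push_cast; ring
    -- the derivative via term-by-term differentiation
    have hball0 : (0:ℝ) ∈ Metric.ball (0:ℝ) r1 := by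
      simp [Real.dist_eq, hr1pos]
    have hballx : x ∈ Metric.ball (0:ℝ) r1 := by
      simpa [Real.dist_eq] using hxr1
    have hg0 : Summable (fun n : ℕ => I n * (0:ℝ) ^ n / (Nat.factorial n : ℝ)) :=
      Summable.of_norm_bounded hgeom (hgb 0 (by simpa using hr1pos.le))
    have hgd : ∀ (n : ℕ), ∀ y : ℝ,
        HasDerivAt (fun t : ℝ => I n * t ^ n / (Nat.factorial n : ℝ))
          (I n * ((n : ℝ) * y ^ (n - 1)) / (Nat.factorial n : ℝ)) y := by
      intro n y
      exact ((hasDerivAt_pow n y).const_mul (I n)).div_const _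
    have HDF : HasDerivAt (fun t : ℝ => ∑' n : ℕ, I n * t ^ n / (Nat.factorial n : ℝ))
        (∑' n : ℕ, I n * ((n : ℝ) * x ^ (n - 1)) / (Nat.factorial n : ℝ)) x := by
      exact hasDerivAt_tsum_of_isPreconnected hu Metric.isOpen_ball
        (convex_ball (0:ℝ) r1).isPreconnected
        (fun n y _ => hgd n y) hub hball0 hg0 hballx
    set d : ℝ := ∑' n : ℕ, I n * ((n : ℝ) * x ^ (n - 1)) / (Nat.factorial n : ℝ) with hddef
    refine ⟨d, by rw [hF]; exact HDF, ?_⟩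
    -- HasSum facts
    have hDsummable : Summable (fun n : ℕ => I n * ((n : ℝ) * x ^ (n - 1)) / (Nat.factorial n : ℝ)) :=
      Summable.of_norm_bounded hu (fun n => hub n x hballx)
    have hD : HasSum (fun n : ℕ => I n * ((n : ℝ) * x ^ (n - 1)) / (Nat.factorial n : ℝ)) d :=
      hDsummable.hasSum
    have hS : HasSum (fun n : ℕ => I n * x ^ n / (Nat.factorial n : ℝ)) (F x) := by
      rw [hF]
      exact (Summable.of_norm_bounded hgeom (hgb x hxr1.le)).hasSum
    -- switch to normalized coefficients
    set c : ℕ → ℝ := fun n => I n / (Nat.factorial n : ℝ) with hcdef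
    have hfne : ∀ n : ℕ, ((Nat.factorial n : ℕ) : ℝ) ≠ 0 := fun n => by
      exact_mod_cast (Nat.factorial_pos n).ne'
    have hc0 : c 0 = 1 := by simp [hcdef, h0]
    have hc1 : c 1 = z := by simp [hcdef, h1]
    have hS' : HasSum (fun n : ℕ => c n * x ^ n) (F x) := by
      have heq : (fun n : ℕ => I n * x ^ n / (Nat.factorial n : ℝ))
          = fun n : ℕ => c n * x ^ n := funext fun n => by rw [hcdef]; ring
      rwa [heq] at hS
    -- derivative series in shifted form
    have hD' : HasSum (fun n : ℕ => ((n : ℝ) + 1) * c (n + 1) * x ^ n) d := by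
      have h1 := (hasSum_nat_add_iff'
        (f := fun n : ℕ => I n * ((n : ℝ) * x ^ (n - 1)) / (Nat.factorial n : ℝ)) 1).mpr hD
      simp only [Finset.range_one, Finset.sum_singleton, Nat.cast_zero, zero_mul, mul_zero,
        zero_div, sub_zero] at h1
      have heq : (fun n : ℕ => I (n + 1) * (((n+1 : ℕ) : ℝ) * x ^ ((n + 1) - 1))
            / (Nat.factorial (n+1) : ℝ))
          = fun n : ℕ => ((n : ℝ) + 1) * c (n + 1) * x ^ n := by
        funext n
        rw [Nat.add_sub_cancel]
        simp only [hcdef, Nat.factorial_succ]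
        push_cast
        field_simp
      rwa [heq] at h1
    -- recurrence for the normalized coefficients
    have hcrec : ∀ m : ℕ, ((m : ℝ) + 2) * c (m + 2) = z * c (m + 1) + 1/4 * ((m : ℝ) - ω) * c m := by
      intro m
      have hr := hrec (m + 1) (by omega)
      simp only [Nat.add_sub_cancel] at hr
      have hf2 : ((Nat.factorial (m + 2) : ℕ) : ℝ)
          = ((m : ℝ) + 2) * ((m : ℝ) + 1) * (Nat.factorial m : ℝ) := by
        rw [Nat.factorial_succ, Nat.factorial_succ]; push_cast; ring
      have hf1 : ((Nat.factorial (m + 1) : ℕ) : ℝ)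
          = ((m : ℝ) + 1) * (Nat.factorial m : ℝ) := by
        rw [Nat.factorial_succ]; push_cast; ring
      simp only [hcdef]
      rw [show m + 2 = (m + 1) + 1 from rfl] at *
      rw [hr, hf2, hf1]
      have hm0 : ((m : ℝ) + 1) ≠ 0 := by positivity
      have hm2 : ((m : ℝ) + 2) ≠ 0 := by positivity
      field_simp
      push_cast
      ring
    -- claim 1 : HasSum u1 (d - z * F x)
    set u1 : ℕ → ℝ := fun n => match n with
      | 0 => 0
      | (m+1) => 1/4 * ((m : ℝ) - ω) * c m * x ^ (m + 1) with hu1def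
    have claim1 : HasSum u1 (d - z * F x) := by
      have h := hD'.sub (hS'.mul_left z)
      have heq : (fun n : ℕ => ((n : ℝ) + 1) * c (n + 1) * x ^ n - z * (c n * x ^ n)) = u1 := by
        funext n
        match n with
        | 0 => simp [hu1def, hc1, hc0]
        | (m+1) =>
          show ((((m+1) : ℕ) : ℝ) + 1) * c (m + 2) * x ^ (m+1) - z * (c (m + 1) * x ^ (m+1))
            = 1/4 * ((m : ℝ) - ω) * c m * x ^ (m + 1)
          have := hcrec m
          push_cast
          linear_combination x ^ (m + 1) * this
      rwa [heq] at h
    -- claim 2 : HasSum u1 (x^2/4 * d - ω * x / 4 * F x)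
    have claim2 : HasSum u1 (x ^ 2 / 4 * d - ω * x / 4 * F x) := by
      have hshift : HasSum (fun n : ℕ => c (n + 1) * x ^ (n + 1)) (F x - 1) := by
        have h1 := (hasSum_nat_add_iff' (f := fun n : ℕ => c n * x ^ n) 1).mpr hS'
        simpa [hc0] using h1
      have h2 := (hD'.mul_left (x ^ 2 / 4)).sub (hshift.mul_left (ω * x / 4))
      have heq : (fun n : ℕ => x ^ 2 / 4 * (((n : ℝ) + 1) * c (n + 1) * x ^ n)
            - ω * x / 4 * (c (n + 1) * x ^ (n + 1)))
          = fun n : ℕ => u1 (n + 2) := by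
        funext n
        show x ^ 2 / 4 * (((n : ℝ) + 1) * c (n + 1) * x ^ n)
            - ω * x / 4 * (c (n + 1) * x ^ (n + 1))
          = 1/4 * ((((n+1) : ℕ) : ℝ) - ω) * c (n + 1) * x ^ (n + 2)
        push_cast
        ring
      rw [heq] at h2
      have h3 := (hasSum_nat_add_iff' (f := u1) (g := x ^ 2 / 4 * d - ω * x / 4 * F x) 2).mp ?_
      · exact h3
      · convert h2 using 1
        have e0 : u1 0 = 0 := rfl
        have e1 : u1 1 = 1/4 * ((0 : ℕ) : ℝ) * c 0 * x ^ (0 + 1) - 1/4 * ω * c 0 * x ^ (0+1) := by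
          rw [hu1def]; ring
        have : ∑ i ∈ Finset.range 2, u1 i = - (ω * x / 4) := by
          rw [Finset.sum_range_succ, Finset.sum_range_one, e0, e1, hc0]
          push_cast; ring
        rw [this]
        ring
    have huniq := claim1.unique claim2
    linear_combination huniq


  -- the closed form via an ODE argument
  set H : ℝ → ℝ := fun t => F t * (1 - t / 2) ^ (z - ω / 2) * (1 + t / 2) ^ (-(ω / 2 + z))
    with hHdef
  have hH0 : H 0 = 1 := by
    simp [hHdef, hF0, Real.one_rpow]
  have hHderiv : ∀ y : ℝ, |y| < 2 → HasDerivAt H 0 y := by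
    intro y hy
    obtain ⟨hy1, hy2⟩ := abs_lt.mp hy
    have hu : (0:ℝ) < 1 - y / 2 := by linarith
    have hv : (0:ℝ) < 1 + y / 2 := by linarith
    obtain ⟨d, hd, hode⟩ := hMain y hy
    have hw : (0:ℝ) < 1 - y ^ 2 / 4 := by nlinarith
    have hdeq : d = (z - ω * y / 4) * F y / (1 - y ^ 2 / 4) := by
      rw [eq_div_iff hw.ne']; linarith [hode]
    -- derivative of the first factor
    have hbase1 : HasDerivAt (fun t : ℝ => 1 - t / 2) (-(1/2)) y := by
      simpa using ((hasDerivAt_id y).div_const 2).const_sub 1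
    have hbase2 : HasDerivAt (fun t : ℝ => 1 + t / 2) (1/2) y := by
      simpa using ((hasDerivAt_id y).div_const 2).const_add 1
    have hP := hbase1.rpow_const (p := z - ω / 2) (Or.inl hu.ne')
    have hQ := hbase2.rpow_const (p := -(ω / 2 + z)) (Or.inl hv.ne')
    have htot := (hd.mul hP).mul hQ
    have e1 : (1 - y / 2) ^ (z - ω / 2 - 1) = (1 - y / 2) ^ (z - ω / 2) / (1 - y / 2) :=
      Real.rpow_sub_one hu.ne' _
    have e2 : (1 + y / 2) ^ (-(ω / 2 + z) - 1) = (1 + y / 2) ^ (-(ω / 2 + z)) / (1 + y / 2) :=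
      Real.rpow_sub_one hv.ne' _
    have huv : ((1 - y/2) * (1 + y/2)) ≠ 0 := (mul_pos hu hv).ne'
    have c1 : (1 - y / 2) ^ (z - ω / 2) / (1 - y / 2) * (1 - y / 2)
        = (1 - y / 2) ^ (z - ω / 2) := div_mul_cancel₀ _ hu.ne'
    have c2 : (1 + y / 2) ^ (-(ω / 2 + z)) / (1 + y / 2) * (1 + y / 2)
        = (1 + y / 2) ^ (-(ω / 2 + z)) := div_mul_cancel₀ _ hv.ne'
    have key : ((d * (1 - y / 2) ^ (z - ω / 2)
          + F y * (-(1/2) * (z - ω / 2) * (1 - y / 2) ^ (z - ω / 2 - 1)))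
          * (1 + y / 2) ^ (-(ω / 2 + z))
        + F y * (1 - y / 2) ^ (z - ω / 2)
          * (1/2 * (-(ω / 2 + z)) * (1 + y / 2) ^ (-(ω / 2 + z) - 1)))
          * ((1 - y/2) * (1 + y/2))
        = (1 - y / 2) ^ (z - ω / 2) * (1 + y / 2) ^ (-(ω / 2 + z))
          * ((1 - y ^ 2 / 4) * d - (z - ω * y / 4) * F y) := by
      rw [e1, e2]
      linear_combination
        (F y * (-(1/2)) * (z - ω/2) * ((1 + y/2) ^ (-(ω / 2 + z))) * (1 + y/2)) * c1
        + (F y * ((1 - y/2) ^ (z - ω/2)) * (1/2) * (-(ω/2+z)) * (1 - y/2)) * c2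
    have hzero : (d * (1 - y / 2) ^ (z - ω / 2)
          + F y * (-(1/2) * (z - ω / 2) * (1 - y / 2) ^ (z - ω / 2 - 1)))
          * (1 + y / 2) ^ (-(ω / 2 + z))
        + F y * (1 - y / 2) ^ (z - ω / 2)
          * (1/2 * (-(ω / 2 + z)) * (1 + y / 2) ^ (-(ω / 2 + z) - 1)) = 0 := by
      have h5 : ((d * (1 - y / 2) ^ (z - ω / 2)
            + F y * (-(1/2) * (z - ω / 2) * (1 - y / 2) ^ (z - ω / 2 - 1)))
            * (1 + y / 2) ^ (-(ω / 2 + z))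
          + F y * (1 - y / 2) ^ (z - ω / 2)
            * (1/2 * (-(ω / 2 + z)) * (1 + y / 2) ^ (-(ω / 2 + z) - 1)))
            * ((1 - y/2) * (1 + y/2)) = 0 := by
        rw [key, hode, sub_self, mul_zero]
      rcases mul_eq_zero.mp h5 with h' | h'
      · exact h'
      · exact absurd h' huv
    rw [hHdef]
    exact htot.congr_deriv (by simp only [Pi.mul_apply]; linear_combination hzero)
  have hconst : ∀ x : ℝ, |x| < 2 → H x = 1 := by
    intro x hx
    obtain ⟨hx1, hx2⟩ := abs_lt.mp hx
    rcases le_or_gt 0 x with hx0 | hx0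
    · have habs : ∀ y ∈ Icc (0:ℝ) x, |y| < 2 := by
        intro y hy; rw [abs_lt]; constructor <;> [linarith [hy.1]; linarith [hy.2]]
      have := constant_of_has_deriv_right_zero
        (f := H) (a := 0) (b := x)
        (fun y hy => ((hHderiv y (habs y hy)).continuousAt).continuousWithinAt)
        (fun y hy => ((hHderiv y (habs y ⟨hy.1, hy.2.le⟩)).hasDerivWithinAt))
        x ⟨hx0, le_refl x⟩
      rw [this, hH0]
    · have habs : ∀ y ∈ Icc x (0:ℝ), |y| < 2 := by
        intro y hy; rw [abs_lt]; constructor <;> [linarith [hy.1]; linarith [hy.2]]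
      have := constant_of_has_deriv_right_zero
        (f := H) (a := x) (b := 0)
        (fun y hy => ((hHderiv y (habs y hy)).continuousAt).continuousWithinAt)
        (fun y hy => ((hHderiv y (habs y ⟨hy.1, hy.2.le⟩)).hasDerivWithinAt))
        0 ⟨hx0.le, le_refl 0⟩
      rw [← this, hH0]
  refine ⟨hF0, fun x hx => ⟨hMain x hx, ?_⟩⟩
  obtain ⟨hx1, hx2⟩ := abs_lt.mp hx
  have hu : (0:ℝ) < 1 - x / 2 := by linarith
  have hv : (0:ℝ) < 1 + x / 2 := by linarith
  have hH := hconst x hx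
  rw [hHdef] at hH
  simp only at hH
  have hA : (0:ℝ) < (1 - x / 2) ^ (z - ω / 2) := Real.rpow_pos_of_pos hu _
  have hB : (0:ℝ) < (1 + x / 2) ^ (-(ω / 2 + z)) := Real.rpow_pos_of_pos hv _
  have g1 : (1 - x / 2) ^ (ω / 2 - z) = ((1 - x / 2) ^ (z - ω / 2))⁻¹ := by
    rw [show ω / 2 - z = -(z - ω / 2) by ring, Real.rpow_neg hu.le]
  have g2 : (1 + x / 2) ^ (ω / 2 + z) = ((1 + x / 2) ^ (-(ω / 2 + z)))⁻¹ := by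
    rw [← Real.rpow_neg hv.le, neg_neg]
  rw [g1, g2, ← mul_inv]
  have hheq : F x * ((1 - x / 2) ^ (z - ω / 2) * (1 + x / 2) ^ (-(ω / 2 + z))) = 1 := by
    linear_combination hH
  exact eq_inv_of_mul_eq_one_left (by linear_combination hheq)
end

section
/- Suppose a sequence of polynomials Ĩ_k in a commuting variable z satisfies Ĩ_0 = 1, Ĩ_1 = z, and Ĩ_{k+1} = z·Ĩ_k + (k/4)(k-1-ω)·Ĩ_{k-1}, and suppose coefficients r̃_k satisfy (k - u)·r̃_k = ((k+2+u-ω)/4)·r̃_{k+2} with r̃_k = 0 for all k > K (some cutoff). Then the finite sum R(z) = Σ_{k=0}^{K} (r̃_k/k!)·Ĩ_k(z) satisfies (z - u)·R(z+1) = (z + u)·R(z-1) as an identity of polynomials in z, provided the stated truncation is consistent with the recurrences (i.e., (K+1-u)·r̃_{K+1} = 0 and (K-u)·r̃_K = 0 hold for indices beyond the cutoff as required). -/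
open Polynomial Finset

private lemma shiftF (ω : ℂ) (I : ℕ → ℂ[X])
    (h0 : I 0 = 1) (h1 : I 1 = X)
    (hrec : ∀ k : ℕ, 1 ≤ k →
      I (k + 1) = X * I k + C ((k : ℂ) / 4 * ((k : ℂ) - 1 - ω)) * I (k - 1))
    (ε : ℂ) (hε : ε * ε = 1) :
    ∀ k : ℕ, (2:ℂ[X]) * (I (k+1)).comp (X + C ε) - C ε * (C (k:ℂ) + 1) * (I k).comp (X + C ε)
      = 2 * I (k+1) + C ε * (C (k:ℂ) + 1) * I k := by
  have hCε : (C ε) * (C ε) = (1:ℂ[X]) := by rw [← C_mul, hε, C_1]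
  have h4 : ∀ n : ℕ, (4:ℂ[X]) * I (n+2)
      = 4 * (X * I (n+1)) + (C (n:ℂ) + 1) * (C (n:ℂ) - C ω) * I n := by
    intro n
    have h := hrec (n+1) (by omega)
    simp only [Nat.add_sub_cancel] at h
    rw [h]
    have hc : (4:ℂ[X]) * C (((n+1:ℕ):ℂ)/4*(((n+1:ℕ):ℂ)-1-ω))
        = (C (n:ℂ) + 1) * (C (n:ℂ) - C ω) := by
      rw [show (4:ℂ[X]) = C (4:ℂ) from (map_ofNat C 4).symm, ← C_mul]
      push_cast
      rw [show (4:ℂ)*(((n:ℂ)+1)/4*(((n:ℂ)+1)-1-ω)) = ((n:ℂ)+1)*((n:ℂ)-ω) from by ring]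
      simp [map_add, map_sub, map_mul, map_one]
    linear_combination hc * I n
  have h4c : ∀ n : ℕ, (4:ℂ[X]) * (I (n+2)).comp (X + C ε)
      = 4 * ((X + C ε) * (I (n+1)).comp (X + C ε))
        + (C (n:ℂ) + 1) * (C (n:ℂ) - C ω) * (I n).comp (X + C ε) := by
    intro n
    have := congrArg (fun p : ℂ[X] => p.comp (X + C ε)) (h4 n)
    simpa [add_comp, mul_comp, X_comp, C_comp] using this
  intro k
  induction k using Nat.strong_induction_on with
  | _ k ih =>
    rcases k with _ | _ | n
    · simp only [Nat.cast_zero, map_zero, zero_add, h0, h1, X_comp, one_comp]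
      ring
    · have e1 := h4c 0
      have e2 := h4 0
      simp only [Nat.cast_zero, Nat.cast_one, map_zero, map_one, zero_add, h0, h1, X_comp,
        one_comp] at e1 e2 ⊢
      apply mul_left_cancel₀ (show (4:ℂ[X]) ≠ 0 by norm_num)
      linear_combination 2*e1 - 2*e2
    · have e1 := h4c (n+1)
      have e2 := h4 (n+1)
      have e3 := ih (n+1) (by omega)
      have e4 := ih n (by omega)
      have e5 := h4c n
      have e6 := h4 n
      simp only [show n+1+2 = n+3 from rfl, show n+1+1 = n+2 from rfl,
        show n+1+1+1 = n+3 from rfl] at e1 e2 e3 ⊢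
      push_cast at e1 e2 e3 e4 e5 e6 ⊢
      simp only [map_add, map_one, map_ofNat] at e1 e2 e3 e4 e5 e6 ⊢
      apply mul_left_cancel₀ (show (4:ℂ[X]) ≠ 0 by norm_num)
      linear_combination 2*e1 - 2*e2 + (4*X + 2*C ε)*e3
        + ((C (n:ℂ)+2)*((C (n:ℂ)+1) - C ω - C ε * C ε))*e4
        - (C ε*(C (n:ℂ)+2))*e5 - (C ε*(C (n:ℂ)+2))*e6
        + (C ε*(C (n:ℂ)+2)*(1 - (C (n:ℂ)+2))*((I n).comp (X + C ε) + I n))*hCε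

noncomputable def wg (ε : ℂ) (m : ℕ) : ℂ := if m = 0 then 1 else 2 * (ε/2)^m

lemma wg_zero (ε : ℂ) : wg ε 0 = 1 := by simp [wg]
lemma wg_one (ε : ℂ) : wg ε 1 = ε := by simp [wg]; ring
lemma wg_succ (ε : ℂ) (m : ℕ) (hm : m ≠ 0) : wg ε (m+1) = ε/2 * wg ε m := by
  simp [wg, hm]; ring

private lemma expand (ω : ℂ) (I : ℕ → ℂ[X])
    (h0 : I 0 = 1) (h1 : I 1 = X)
    (hrec : ∀ k : ℕ, 1 ≤ k →
      I (k + 1) = X * I k + C ((k : ℂ) / 4 * ((k : ℂ) - 1 - ω)) * I (k - 1))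
    (ε : ℂ) (hε : ε * ε = 1) :
    ∀ p : ℕ, (I p).comp (X + C ε)
      = ∑ j ∈ Finset.range (p+1),
          C (wg ε (p - j) * (Nat.factorial p : ℂ) / (Nat.factorial j : ℂ)) * I j := by
  intro p
  induction p with
  | zero => simp [h0, wg]
  | succ p ihp =>
    have hs := shiftF ω I h0 h1 hrec ε hε p
    apply mul_left_cancel₀ (show (2:ℂ[X]) ≠ 0 by norm_num)
    have step1 : (2:ℂ[X]) * (I (p+1)).comp (X + C ε)
        = 2 * I (p+1) + C ε * (C (p:ℂ) + 1) * ((I p).comp (X + C ε) + I p) := by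
      linear_combination hs
    rw [step1, ihp]
    -- now pure sum manipulation
    have key : ∀ j ∈ Finset.range p,
        (C ε * (C (p:ℂ) + 1) * C (wg ε (p-j) * (Nat.factorial p : ℂ) / (Nat.factorial j : ℂ))) * I j
          = (2 * C (wg ε (p+1-j) * (Nat.factorial (p+1) : ℂ) / (Nat.factorial j : ℂ))) * I j := by
      intro j hj
      rw [Finset.mem_range] at hj
      congr 1
      have h2 : (2:ℂ[X]) = C (2:ℂ) := (map_ofNat C 2).symm
      have hc1 : C (p:ℂ) + 1 = C ((p:ℂ)+1) := by simp [map_add]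
      rw [h2, hc1, ← C_mul, ← C_mul, ← C_mul]
      congr 1
      have hp1 : p + 1 - j = (p - j) + 1 := by omega
      rw [hp1, wg_succ _ _ (by omega), Nat.factorial_succ]
      push_cast
      ring
    have hsum : C ε * (C (p:ℂ) + 1) * ∑ j ∈ Finset.range p,
          C (wg ε (p-j) * (Nat.factorial p : ℂ) / (Nat.factorial j : ℂ)) * I j
        = 2 * ∑ j ∈ Finset.range p,
          C (wg ε (p+1-j) * (Nat.factorial (p+1) : ℂ) / (Nat.factorial j : ℂ)) * I j := by
      rw [Finset.mul_sum, Finset.mul_sum]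
      refine Finset.sum_congr rfl (fun j hj => ?_)
      rw [← mul_assoc, ← mul_assoc]
      exact key j hj
    have etop : C (wg ε (p+1-(p+1)) * (Nat.factorial (p+1) : ℂ) / (Nat.factorial (p+1) : ℂ)) = 1 := by
      simp only [Nat.sub_self, wg_zero, one_mul]
      rw [div_self (by exact_mod_cast Nat.factorial_ne_zero (p+1)), map_one]
    have ep : C (wg ε (p+1-p) * (Nat.factorial (p+1) : ℂ) / (Nat.factorial p : ℂ))
        = C ε * (C (p:ℂ) + 1) := by
      have hc1 : C (p:ℂ) + 1 = C ((p:ℂ)+1) := by simp [map_add]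
      rw [hc1, ← C_mul]
      congr 1
      rw [show p + 1 - p = 1 from by omega, wg_one, Nat.factorial_succ]
      have : (Nat.factorial p : ℂ) ≠ 0 := by exact_mod_cast Nat.factorial_ne_zero p
      field_simp
      push_cast
      ring
    have epp : C (wg ε (p-p) * (Nat.factorial p : ℂ) / (Nat.factorial p : ℂ)) = 1 := by
      simp only [Nat.sub_self, wg_zero, one_mul]
      rw [div_self (by exact_mod_cast Nat.factorial_ne_zero p), map_one]
    rw [Finset.sum_range_succ (n := p+1), Finset.sum_range_succ (n := p),
      Finset.sum_range_succ (n := p), etop, ep, epp]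
    linear_combination hsum

private lemma tri_sum {M : Type*} [AddCommMonoid M] (g : ℕ → ℕ → M) :
    ∀ N : ℕ, ∑ p ∈ Finset.range N, ∑ j ∈ Finset.range (p+1), g j (p - j)
      = ∑ j ∈ Finset.range N, ∑ m ∈ Finset.range (N - j), g j m := by
  intro N
  induction N with
  | zero => simp
  | succ N ih =>
    rw [Finset.sum_range_succ, ih, Finset.sum_range_succ (n := N)]
    have hinner : ∀ j ∈ Finset.range N,
        ∑ m ∈ Finset.range (N+1-j), g j m
          = (∑ m ∈ Finset.range (N-j), g j m) + g j (N-j) := by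
      intro j hj
      rw [Finset.mem_range] at hj
      rw [show N+1-j = (N-j)+1 from by omega, Finset.sum_range_succ]
    rw [Finset.sum_range_succ (n := N), Finset.sum_congr rfl hinner,
      Finset.sum_add_distrib]
    simp [Nat.sub_self]
    abel

private lemma compSum (ω : ℂ) (I : ℕ → ℂ[X]) (r : ℕ → ℂ) (K : ℕ)
    (h0 : I 0 = 1) (h1 : I 1 = X)
    (hrec : ∀ k : ℕ, 1 ≤ k →
      I (k + 1) = X * I k + C ((k : ℂ) / 4 * ((k : ℂ) - 1 - ω)) * I (k - 1))
    (hvanish : ∀ k : ℕ, K < k → r k = 0)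
    (ε : ℂ) (hε : ε * ε = 1) :
    (∑ k ∈ Finset.range (K+1), C (r k / (Nat.factorial k : ℂ)) * I k).comp (X + C ε)
      = ∑ j ∈ Finset.range (K+1),
          C ((∑ m ∈ Finset.range (K+1), wg ε m * r (j+m)) / (Nat.factorial j : ℂ)) * I j := by
  have hcs : ∀ (s : Finset ℕ) (f : ℕ → ℂ[X]) (q : ℂ[X]),
      (∑ i ∈ s, f i).comp q = ∑ i ∈ s, (f i).comp q := by
    intros s f q
    simp [Polynomial.comp, Polynomial.eval₂_finset_sum]
  rw [hcs]
  have step1 : ∀ p ∈ Finset.range (K+1),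
      (C (r p / (Nat.factorial p : ℂ)) * I p).comp (X + C ε)
        = ∑ j ∈ Finset.range (p+1),
            C (wg ε (p - j) * r (j + (p - j)) / (Nat.factorial j : ℂ)) * I j := by
    intro p _
    rw [mul_comp, C_comp, expand ω I h0 h1 hrec ε hε p, Finset.mul_sum]
    refine Finset.sum_congr rfl (fun j hj => ?_)
    rw [Finset.mem_range] at hj
    rw [← mul_assoc, ← C_mul, Nat.add_sub_cancel' (by omega : j ≤ p)]
    congr 2
    have hp : (Nat.factorial p : ℂ) ≠ 0 := by exact_mod_cast Nat.factorial_ne_zero p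
    have hjf : (Nat.factorial j : ℂ) ≠ 0 := by exact_mod_cast Nat.factorial_ne_zero j
    field_simp
  rw [Finset.sum_congr rfl step1,
    tri_sum (fun j m => C (wg ε m * r (j + m) / (Nat.factorial j : ℂ)) * I j) (K+1)]
  refine Finset.sum_congr rfl (fun j hj => ?_)
  rw [Finset.mem_range] at hj
  rw [Finset.sum_subset (Finset.range_subset_range.2 (by omega : K+1-j ≤ K+1))
    (fun m hm hm' => by
      rw [Finset.mem_range] at hm hm'
      have : r (j + m) = 0 := hvanish _ (by omega)
      simp [this])]
  rw [← Finset.sum_mul, ← map_sum, Finset.sum_div]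

private noncomputable def sg (r : ℕ → ℂ) (K : ℕ) (ε : ℂ) (j : ℕ) : ℂ :=
  ∑ m ∈ Finset.range (K+1), wg ε m * r (j+m)

private noncomputable def sig (r : ℕ → ℂ) (K : ℕ) (j : ℕ) : ℂ :=
  ∑ i ∈ Finset.range (K+1), r (j+2*i) / 4^i

section scalar
variable (u ω : ℂ) (r : ℕ → ℂ) (K : ℕ)
variable (hvanish : ∀ k : ℕ, K < k → r k = 0)

set_option linter.unusedVariables false

include hvanish in
private lemma sg_vanish (ε : ℂ) (j : ℕ) (hj : K < j) : sg r K ε j = 0 := by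
  refine Finset.sum_eq_zero (fun m _ => ?_)
  rw [hvanish (j+m) (by omega), mul_zero]

include hvanish in
private lemma sig_vanish (j : ℕ) (hj : K < j) : sig r K j = 0 := by
  refine Finset.sum_eq_zero (fun i _ => ?_)
  rw [hvanish (j+2*i) (by omega), zero_div]

include hvanish in
private lemma sig_rec (j : ℕ) : sig r K j = r j + sig r K (j+2) / 4 := by
  unfold sig
  rw [Finset.sum_range_succ', Finset.sum_div, Finset.sum_range_succ]
  rw [hvanish (j+2+2*K) (by omega)]
  have hterm : ∀ k ∈ Finset.range K, r (j+2*(k+1)) / 4^(k+1)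
      = r (j+2+2*k) / 4^k / 4 := by
    intro k _
    rw [show j+2*(k+1) = j+2+2*k from by omega, pow_succ, ← div_div]
  rw [Finset.sum_congr rfl hterm]
  simp only [Nat.mul_zero, Nat.add_zero, pow_zero, div_one, zero_div, add_zero]
  ring

include hvanish in
private lemma sig_key (hr : ∀ k : ℕ, ((k:ℂ) - u) * r k = (((k:ℂ) + 2 + u - ω)/4) * r (k+2)) :
    ∀ j : ℕ, (2*u - ω) * sig r K j = ((j:ℂ) + u - ω) * r j := by
  have aux : ∀ n : ℕ, ∀ j : ℕ, K + 1 ≤ j + n →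
      (2*u - ω) * sig r K j = ((j:ℂ) + u - ω) * r j := by
    intro n
    induction n with
    | zero =>
      intro j hj
      rw [sig_vanish r K hvanish j (by omega), hvanish j (by omega)]
      ring
    | succ n ih =>
      intro j hj
      have h2 := ih (j+2) (by omega)
      push_cast at h2
      have hrj := hr j
      rw [sig_rec r K hvanish j]
      linear_combination h2/4 - hrj
  exact fun j => aux (K+1) j (by omega)

include hvanish in
private lemma sg_rec (ε : ℂ) (j : ℕ) :
    sg r K ε j = r j + ε * (r (j+1) + sg r K ε (j+1)) / 2 := by
  by_cases hK : K = 0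
  · subst hK
    have h1 : r (j+1) = 0 := hvanish _ (by omega)
    simp [sg, wg_zero, h1]
  · obtain ⟨K', rfl⟩ := Nat.exists_eq_succ_of_ne_zero hK
    unfold sg
    rw [Finset.sum_range_succ' (n := K'+1), Finset.sum_range_succ' (n := K')]
    conv_rhs => rw [Finset.sum_range_succ' (n := K'+1)]
    rw [Finset.sum_range_succ (n := K')]
    rw [hvanish (j+1+(K'+1)) (by omega)]
    simp only [Nat.add_zero, wg_zero, wg_one, one_mul, mul_zero, add_zero]
    have hterm : ∀ m ∈ Finset.range K', wg ε (m+1+1) * r (j+(m+1+1))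
        = ε/2 * (wg ε (m+1) * r (j+1+(m+1))) := by
      intro m _
      rw [wg_succ ε (m+1) (by omega), show j+(m+1+1) = j+1+(m+1) from by omega]
      ring
    rw [Finset.sum_congr rfl hterm, ← Finset.mul_sum, wg_one]
    ring
end scalar

section scalar2
variable (u ω : ℂ) (r : ℕ → ℂ) (K : ℕ)
variable (hvanish : ∀ k : ℕ, K < k → r k = 0)

set_option linter.unusedVariables false

include hvanish in
private lemma sg_DS : ∀ j : ℕ,
    sg r K 1 j - sg r K (-1) j = 2 * sig r K (j+1)
      ∧ sg r K 1 j + sg r K (-1) j = 2 * r j + sig r K (j+2) := by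
  have aux : ∀ n : ℕ, ∀ j : ℕ, K + 1 ≤ j + n →
      sg r K 1 j - sg r K (-1) j = 2 * sig r K (j+1)
        ∧ sg r K 1 j + sg r K (-1) j = 2 * r j + sig r K (j+2) := by
    intro n
    induction n with
    | zero =>
      intro j hj
      rw [sg_vanish r K hvanish 1 j (by omega), sg_vanish r K hvanish (-1) j (by omega),
        sig_vanish r K hvanish (j+1) (by omega), sig_vanish r K hvanish (j+2) (by omega),
        hvanish j (by omega)]
      constructor <;> ring
    | succ n ih =>
      intro j hj
      obtain ⟨ih1, ih2⟩ := ih (j+1) (by omega)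
      have hs := sg_rec r K hvanish 1 j
      have ht := sg_rec r K hvanish (-1) j
      have hσ1 := sig_rec r K hvanish (j+1)
      simp only [show j+1+1 = j+2 from rfl, show j+1+2 = j+3 from rfl] at ih1 ih2 hσ1
      constructor
      · linear_combination hs - ht + ih2/2 - 2*hσ1
      · linear_combination hs + ht + ih1/2
  exact fun j => aux (K+1) j (by omega)

end scalar2

private noncomputable def ccc (ω : ℂ) (j : ℕ) : ℂ := (j:ℂ)/4*((j:ℂ)-1-ω)

private lemma coef_gamma (u ω : ℂ) (r : ℕ → ℂ) (K : ℕ)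
    (hvanish : ∀ k : ℕ, K < k → r k = 0)
    (hr : ∀ k : ℕ, ((k:ℂ) - u) * r k = (((k:ℂ) + 2 + u - ω)/4) * r (k+2)) :
    ∀ i : ℕ, (if i = 0 then (0:ℂ) else (i:ℂ) * (sg r K 1 (i-1) - sg r K (-1) (i-1)))
      - (sg r K 1 (i+1) - sg r K (-1) (i+1)) * (((i:ℂ)-ω)/4)
      - u * (sg r K 1 i + sg r K (-1) i) = 0 := by
  intro i
  rcases i with _ | m
  · rw [if_pos rfl]
    simp only [Nat.zero_add, Nat.cast_zero]
    have hd1 := (sg_DS r K hvanish 1).1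
    have hs0 := (sg_DS r K hvanish 0).2
    have hkey := sig_key u ω r K hvanish hr 2
    have hr0 := hr 0
    push_cast at hkey hr0
    simp only [show (0:ℕ)+1 = 1 from rfl, show (1:ℕ)+1 = 2 from rfl,
      show (0:ℕ)+2 = 2 from rfl] at hd1 hs0
    linear_combination (ω/4)*hd1 - u*hs0 - hkey/2 + 2*hr0
  · simp only [Nat.add_sub_cancel, if_neg (Nat.succ_ne_zero m)]
    have hdm := (sg_DS r K hvanish m).1
    have hdm2 := (sg_DS r K hvanish (m+2)).1
    have hsm1 := (sg_DS r K hvanish (m+1)).2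
    have hP1 := sig_rec r K hvanish (m+1)
    have hP2 := sig_key u ω r K hvanish hr (m+3)
    have hP3 := hr (m+1)
    simp only [show m+2+1 = m+3 from rfl, show m+1+2 = m+3 from rfl] at hdm2 hP1 hsm1 hP3
    push_cast at hP2 hP3 ⊢
    linear_combination ((m:ℂ)+1)*hdm - (((m:ℂ)+1-ω)/4)*hdm2 - u*hsm1
      + 2*((m:ℂ)+1)*hP1 + 2*hP3 - hP2/2

/-- If `Ĩ_k` satisfy `Ĩ_0 = 1`, `Ĩ_1 = X`, `Ĩ_{k+1} = X Ĩ_k + (k/4)(k-1-ω) Ĩ_{k-1}`, and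
coefficients `r̃_k` satisfy `(k-u) r̃_k = ((k+2+u-ω)/4) r̃_{k+2}` and vanish for `k > K`,
then `R(z) = Σ_{k=0}^{K} (r̃_k/k!) Ĩ_k(z)` satisfies
`(z-u) R(z+1) = (z+u) R(z-1)` as an identity of polynomials. -/
theorem stmt4 (u ω : ℂ) (I : ℕ → Polynomial ℂ) (r : ℕ → ℂ) (K : ℕ)
    (h0 : I 0 = 1) (h1 : I 1 = X)
    (hrec : ∀ k : ℕ, 1 ≤ k →
      I (k + 1) = X * I k + C ((k : ℂ) / 4 * ((k : ℂ) - 1 - ω)) * I (k - 1))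
    (hr : ∀ k : ℕ, ((k : ℂ) - u) * r k = (((k : ℂ) + 2 + u - ω) / 4) * r (k + 2))
    (hvanish : ∀ k : ℕ, K < k → r k = 0) :
    ∀ R : Polynomial ℂ,
      R = ∑ k ∈ Finset.range (K + 1), C (r k / (Nat.factorial k : ℂ)) * I k →
      (X - C u) * R.comp (X + 1) = (X + C u) * R.comp (X - 1) := by
  intro R hR
  have hfne : ∀ j : ℕ, ((Nat.factorial j : ℂ)) ≠ 0 := fun j => by
    exact_mod_cast Nat.factorial_ne_zero j
  have hP : R.comp (X + 1)
      = ∑ j ∈ Finset.range (K + 1), C (sg r K 1 j / (Nat.factorial j : ℂ)) * I j := by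
    rw [hR]
    have h := compSum ω I r K h0 h1 hrec hvanish 1 (by norm_num)
    rwa [C_1] at h
  have hQ : R.comp (X - 1)
      = ∑ j ∈ Finset.range (K + 1), C (sg r K (-1) j / (Nat.factorial j : ℂ)) * I j := by
    rw [hR]
    have h := compSum ω I r K h0 h1 hrec hvanish (-1) (by norm_num)
    rw [show X + C (-1 : ℂ) = X - 1 from by rw [map_neg, C_1]; ring] at h
    exact h
  have hXI : ∀ j : ℕ, X * I j = I (j+1) - C (ccc ω j) * I (j-1) := by
    intro j
    rcases j with _ | n
    · rw [h0, h1, show ccc ω 0 = 0 from by simp [ccc], map_zero]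
      ring
    · have h := hrec (n+1) (by omega)
      simp only [Nat.add_sub_cancel] at h
      simp only [show n+1+1 = n+2 from rfl] at h
      rw [show ccc ω (n+1) = ((n+1:ℕ):ℂ)/4*(((n+1:ℕ):ℂ)-1-ω) from rfl]
      simp only [Nat.add_sub_cancel, show n+1+1 = n+2 from rfl]
      linear_combination -h
  rw [hP, hQ]
  have e1 : X * (∑ j ∈ Finset.range (K+1), C (sg r K 1 j / (Nat.factorial j:ℂ)) * I j)
      - X * (∑ j ∈ Finset.range (K+1), C (sg r K (-1) j / (Nat.factorial j:ℂ)) * I j)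
      = (∑ j ∈ Finset.range (K+1),
          C ((sg r K 1 j - sg r K (-1) j) / (Nat.factorial j:ℂ)) * I (j+1))
        - ∑ j ∈ Finset.range (K+1),
            C ((sg r K 1 j - sg r K (-1) j) / (Nat.factorial j:ℂ)) * C (ccc ω j) * I (j-1) := by
    rw [Finset.mul_sum, Finset.mul_sum, ← Finset.sum_sub_distrib, ← Finset.sum_sub_distrib]
    refine Finset.sum_congr rfl (fun j hj => ?_)
    have hx := hXI j
    have hc : C ((sg r K 1 j - sg r K (-1) j) / (Nat.factorial j:ℂ))
        = C (sg r K 1 j / (Nat.factorial j:ℂ)) - C (sg r K (-1) j / (Nat.factorial j:ℂ)) := by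
      rw [sub_div, map_sub]
    linear_combination (-(X * I j)) * hc
      + (C ((sg r K 1 j - sg r K (-1) j) / (Nat.factorial j:ℂ))) * hx
  have e3 : (∑ j ∈ Finset.range (K+1),
        C ((sg r K 1 j - sg r K (-1) j) / (Nat.factorial j:ℂ)) * I (j+1))
      = ∑ i ∈ Finset.range (K+1+1),
          C ((if i = 0 then (0:ℂ) else (i:ℂ) * (sg r K 1 (i-1) - sg r K (-1) (i-1)))
            / (Nat.factorial i:ℂ)) * I i := by
    conv_rhs => rw [Finset.sum_range_succ']
    simp only [if_neg (Nat.succ_ne_zero _), if_pos rfl, if_true, Nat.add_sub_cancel,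
      zero_div, map_zero, zero_mul, add_zero]
    refine Finset.sum_congr rfl (fun j hj => ?_)
    congr 2
    rw [Nat.factorial_succ]
    push_cast
    have h1 : ((j:ℂ)+1) * (Nat.factorial j:ℂ) ≠ 0 := mul_ne_zero (Nat.cast_add_one_ne_zero j) (hfne j)
    rw [div_eq_div_iff (hfne j) h1]
    ring
  have e4 : (∑ j ∈ Finset.range (K+1),
        C ((sg r K 1 j - sg r K (-1) j) / (Nat.factorial j:ℂ)) * C (ccc ω j) * I (j-1))
      = ∑ i ∈ Finset.range (K+1+1),
          C ((sg r K 1 (i+1) - sg r K (-1) (i+1)) * (((i:ℂ)-ω)/4)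
            / (Nat.factorial i:ℂ)) * I i := by
    rw [Finset.sum_range_succ' (n := K)]
    have hg0 : C ((sg r K 1 0 - sg r K (-1) 0) / (Nat.factorial 0:ℂ)) * C (ccc ω 0) * I (0-1)
        = 0 := by
      rw [show ccc ω 0 = 0 from by simp [ccc], map_zero]
      ring
    rw [hg0, add_zero]
    rw [← Finset.sum_subset (Finset.range_subset_range.2 (by omega : K ≤ K+1+1))
      (fun i hi hi' => by
        rw [Finset.mem_range] at hi hi'
        rw [sg_vanish r K hvanish 1 (i+1) (by omega), sg_vanish r K hvanish (-1) (i+1) (by omega)]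
        simp)]
    refine Finset.sum_congr rfl (fun j hj => ?_)
    simp only [Nat.add_sub_cancel]
    rw [← map_mul]
    congr 2
    rw [show ccc ω (j+1) = ((j+1:ℕ):ℂ)/4*(((j+1:ℕ):ℂ)-1-ω) from rfl, Nat.factorial_succ]
    push_cast
    have h1 : ((j:ℂ)+1) * (Nat.factorial j:ℂ) ≠ 0 := mul_ne_zero (Nat.cast_add_one_ne_zero j) (hfne j)
    rw [div_mul_eq_mul_div, div_eq_div_iff h1 (hfne j)]
    ring
  have e5 : C u * (∑ j ∈ Finset.range (K+1), C (sg r K 1 j / (Nat.factorial j:ℂ)) * I j)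
      + C u * (∑ j ∈ Finset.range (K+1), C (sg r K (-1) j / (Nat.factorial j:ℂ)) * I j)
      = ∑ i ∈ Finset.range (K+1+1),
          C (u * (sg r K 1 i + sg r K (-1) i) / (Nat.factorial i:ℂ)) * I i := by
    rw [Finset.mul_sum, Finset.mul_sum, ← Finset.sum_add_distrib]
    rw [← Finset.sum_subset (Finset.range_subset_range.2 (by omega : K+1 ≤ K+1+1))
      (fun i hi hi' => by
        rw [Finset.mem_range] at hi hi'
        rw [sg_vanish r K hvanish 1 i (by omega), sg_vanish r K hvanish (-1) i (by omega)]
        simp)]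
    refine Finset.sum_congr rfl (fun j hj => ?_)
    have hm : C (u * (sg r K 1 j + sg r K (-1) j) / (Nat.factorial j:ℂ))
        = C u * C (sg r K 1 j / (Nat.factorial j:ℂ))
          + C u * C (sg r K (-1) j / (Nat.factorial j:ℂ)) := by
      rw [← map_mul, ← map_mul, ← map_add]
      congr 1
      ring
    rw [hm]
    ring
  have final : (∑ i ∈ Finset.range (K+1+1),
        C ((if i = 0 then (0:ℂ) else (i:ℂ) * (sg r K 1 (i-1) - sg r K (-1) (i-1)))
          / (Nat.factorial i:ℂ)) * I i)
      - (∑ i ∈ Finset.range (K+1+1),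
          C ((sg r K 1 (i+1) - sg r K (-1) (i+1)) * (((i:ℂ)-ω)/4)
            / (Nat.factorial i:ℂ)) * I i)
      - (∑ i ∈ Finset.range (K+1+1),
          C (u * (sg r K 1 i + sg r K (-1) i) / (Nat.factorial i:ℂ)) * I i) = 0 := by
    rw [← Finset.sum_sub_distrib, ← Finset.sum_sub_distrib]
    refine Finset.sum_eq_zero (fun i _ => ?_)
    have hg := coef_gamma u ω r K hvanish hr i
    have hcomb : C ((if i = 0 then (0:ℂ) else (i:ℂ) * (sg r K 1 (i-1) - sg r K (-1) (i-1)))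
          / (Nat.factorial i:ℂ))
        - C ((sg r K 1 (i+1) - sg r K (-1) (i+1)) * (((i:ℂ)-ω)/4) / (Nat.factorial i:ℂ))
        - C (u * (sg r K 1 i + sg r K (-1) i) / (Nat.factorial i:ℂ)) = 0 := by
      rw [← map_sub, ← map_sub, ← sub_div, ← sub_div, hg, zero_div, map_zero]
    linear_combination (I i) * hcomb
  linear_combination e1 + e3 - e4 - e5 + final
end

section
/- Let ω ∈ ℂ, β = 1 - ω/2. In an associative algebra generated by elements s, e with s² = 1, e² = ωe, se = es = e (one-site Brauer relations), the element ρ̂(u) = u(u+β)s - (u+β)·1 + u·e satisfies the unitarity relation ρ̂(u)·ρ̂(-u) = (u² - 1)(u² - β²)·1. -/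
/-- In an algebra with `s² = 1`, `e² = ωe`, `se = es = e`, the element
`ρ̂(u) = u(u+β)s - (u+β)·1 + u·e` with `β = 1 - ω/2` satisfies the unitarity relation
`ρ̂(u)·ρ̂(-u) = (u²-1)(u²-β²)·1`. -/
theorem stmt13 {B : Type*} [Ring B] [Algebra ℂ B] (ω : ℂ) (s e : B)
    (hs : s * s = 1) (he : e * e = ω • e) (hse : s * e = e) (hes : e * s = e)
    (u : ℂ) :
    ∀ β : ℂ, β = 1 - ω / 2 →
      ((u * (u + β)) • s - (u + β) • (1 : B) + u • e) *
        (((-u) * (-u + β)) • s - (-u + β) • (1 : B) + (-u) • e)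
        = ((u ^ 2 - 1) * (u ^ 2 - β ^ 2)) • (1 : B) := by
  intro β hβ
  subst hβ
  simp only [sub_mul, mul_sub, add_mul, mul_add, smul_mul_smul_comm, mul_one, one_mul,
    smul_mul_assoc, mul_smul_comm, hs, hse, hes, he, smul_smul]
  module
end

section
/- In the Brauer algebra B₃(ω) with generators s₁, s₂, e₁, e₂ satisfying the standard relations, the elements ρ̂_i(u) = u(u+β)s_i - (u+β)·1 + u·e_i with β = 1 - ω/2 satisfy the braid Yang–Baxter equation ρ̂₁(u)ρ̂₂(u+v)ρ̂₁(v) = ρ̂₂(v)ρ̂₁(u+v)ρ̂₂(u) for all u, v ∈ ℂ. -/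
/-- In the Brauer algebra `B₃(ω)` the elements `ρ̂_i(u) = u(u+β)s_i - (u+β)·1 + u·e_i`,
`β = 1 - ω/2`, satisfy the braid Yang–Baxter equation
`ρ̂₁(u)ρ̂₂(u+v)ρ̂₁(v) = ρ̂₂(v)ρ̂₁(u+v)ρ̂₂(u)`. -/
theorem stmt14 {B : Type*} [Ring B] [Algebra ℂ B] (ω : ℂ)
    (s1 s2 e1 e2 : B)
    (hs1 : s1 * s1 = 1) (hs2 : s2 * s2 = 1)
    (he1 : e1 * e1 = ω • e1) (he2 : e2 * e2 = ω • e2)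
    (hse1 : s1 * e1 = e1) (hes1 : e1 * s1 = e1)
    (hse2 : s2 * e2 = e2) (hes2 : e2 * s2 = e2)
    (hbraid : s1 * s2 * s1 = s2 * s1 * s2)
    (hee1 : e1 * e2 * e1 = e1) (hee2 : e2 * e1 * e2 = e2)
    (hmix1 : s1 * e2 * e1 = s2 * e1) (hmix2 : e2 * e1 * s2 = e2 * s1)
    (hmix3 : e1 * e2 * s1 = e1 * s2) (hmix4 : s2 * e1 * e2 = s1 * e2)
    (u v : ℂ) :
    ∀ β : ℂ, β = 1 - ω / 2 →
    ∀ ρ : ℂ → B → B → B,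
      (ρ = fun w s e => (w * (w + β)) • s - (w + β) • (1 : B) + w • e) →
      ρ u s1 e1 * ρ (u + v) s2 e2 * ρ v s1 e1 =
        ρ v s2 e2 * ρ (u + v) s1 e1 * ρ u s2 e2 := by

  intro β hβ ρ hρ
  subst hρ
  have hbr : s2 * (s1 * s2) = s1 * (s2 * s1) := by
    rw [← mul_assoc, ← hbraid, mul_assoc]
  have m1 : s1 * (e2 * e1) = s2 * e1 := by rw [← mul_assoc]; exact hmix1
  have m2 : e2 * (e1 * s2) = e2 * s1 := by rw [← mul_assoc]; exact hmix2
  have m3 : e1 * (e2 * s1) = e1 * s2 := by rw [← mul_assoc]; exact hmix3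
  have m4 : s2 * (e1 * e2) = s1 * e2 := by rw [← mul_assoc]; exact hmix4
  have p1 : e1 * (e2 * e1) = e1 := by rw [← mul_assoc]; exact hee1
  have p2 : e2 * (e1 * e2) = e2 := by rw [← mul_assoc]; exact hee2
  have A1 : s1 * (s2 * e1) = e2 * e1 := by
    rw [← hmix1, ← mul_assoc, ← mul_assoc, hs1, one_mul]
  have A2 : e1 * (s2 * s1) = e1 * e2 := by
    rw [← mul_assoc, ← hmix3, mul_assoc, hs1, mul_one]
  have A3 : s2 * (s1 * e2) = e1 * e2 := by
    rw [← hmix4, ← mul_assoc, ← mul_assoc, hs2, one_mul]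
  have A4 : e2 * (s1 * s2) = e2 * e1 := by
    rw [← mul_assoc, ← hmix2, mul_assoc, hs2, mul_one]
  have A5 : e1 * (s2 * e1) = e1 := by
    rw [← mul_assoc, ← hmix3, mul_assoc, hse1, hee1]
  have A6 : e2 * (s1 * e2) = e2 := by
    rw [← mul_assoc, ← hmix2, mul_assoc, hse2, hee2]
  have A7 : s1 * (e2 * s1) = s2 * (e1 * s2) := by
    rw [← hmix3, ← mul_assoc s2, ← mul_assoc s2 e1 e2, hmix4, mul_assoc]
  subst hβ
  simp only [sub_mul, mul_sub, add_mul, mul_add, smul_mul_assoc, mul_smul_comm,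
    smul_smul, smul_sub, smul_add, one_mul, mul_one, mul_assoc,
    hs1, hs2, he1, he2, hse1, hes1, hse2, hes2,
    hbr, m1, m2, m3, m4, p1, p2, A1, A2, A3, A4, A5, A6, A7]
  match_scalars <;> ring
end
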